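/- arXiv:2602.08680 — 2 statements merged into one kernel-verified Lean document; each statement's English description precedes it below -/
import Mathlib

section
/- Let λ > 0, H ∈ (0,1), σ > 0, and define σ̄² = (σ²/(2λ^{2H})) ∫₀^∞ e^{−s} s^{2H} ds. Then for all t > 0, |σ² H (∫₀^t e^{−λz} z^{2H−1} dz + e^{−λt} ∫₀^t e^{−λ(t−z)} z^{2H−1} dz) − σ̄²| ≤ C (σ²/λ^{2H}) e^{−λt/2} for a constant C depending only on H. -/
open MeasureTheory

set_option maxHeartbeats 1000000 in
/-- Exponential convergence of the variance of the fractional Ornstein–Uhlenbeck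
process to its long-time limit σ̄² = (σ²/(2λ^{2H})) ∫₀^∞ e^{−s} s^{2H} ds, with a
constant depending only on H. -/
theorem stmt2 (H : ℝ) (hH : H ∈ Set.Ioo (0:ℝ) 1) :
    ∃ C > 0, ∀ lam σ t : ℝ, 0 < lam → 0 < σ → 0 < t →
      |σ ^ 2 * H * ((∫ z in Set.Ioc (0:ℝ) t, Real.exp (-lam * z) * z ^ (2 * H - 1)) +
            Real.exp (-lam * t) *
              ∫ z in Set.Ioc (0:ℝ) t, Real.exp (-lam * (t - z)) * z ^ (2 * H - 1)) -
          (σ ^ 2 / (2 * lam ^ (2 * H))) * ∫ s in Set.Ioi (0:ℝ), Real.exp (-s) * s ^ (2 * H)|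
        ≤ C * (σ ^ 2 / lam ^ (2 * H)) * Real.exp (-lam * t / 2) := by
  obtain ⟨hH0, hH1⟩ := hH
  have hΓ : 0 < Real.Gamma (2 * H) := Real.Gamma_pos_of_pos (by linarith)
  refine ⟨4 * H * Real.Gamma (2 * H) + 8, by positivity, ?_⟩
  intro lam σ t hlam hσ ht
  set P : ℝ := lam ^ (2 * H) with hP
  have hP0 : 0 < P := Real.rpow_pos_of_pos hlam _
  -- integrability of e^{-bz} z^{2H-1} on Ioi 0
  have hint : ∀ b : ℝ, 0 < b →
      IntegrableOn (fun z : ℝ => Real.exp (-b * z) * z ^ (2 * H - 1)) (Set.Ioi 0) := by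
    intro b hb
    have h := integrableOn_rpow_mul_exp_neg_mul_rpow (p := 1) (s := 2 * H - 1) (b := b)
      (by linarith) one_pos hb
    refine h.congr_fun (fun x hx => ?_) measurableSet_Ioi
    simp only []; rw [Real.rpow_one]; ring
  -- value of the full integral
  have hIval : ∀ b : ℝ, 0 < b →
      ∫ z in Set.Ioi (0:ℝ), Real.exp (-b * z) * z ^ (2 * H - 1)
        = (1 / b) ^ (2 * H) * Real.Gamma (2 * H) := by
    intro b hb
    rw [← Real.integral_rpow_mul_exp_neg_mul_Ioi (by linarith : (0:ℝ) < 2 * H) hb]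
    refine setIntegral_congr_fun measurableSet_Ioi fun x hx => ?_
    rw [neg_mul, mul_comm]
  -- value of J
  have hJ : ∫ s in Set.Ioi (0:ℝ), Real.exp (-s) * s ^ (2 * H)
      = 2 * H * Real.Gamma (2 * H) := by
    rw [show (2:ℝ) * H * Real.Gamma (2 * H) = Real.Gamma (2 * H + 1) by
        rw [Real.Gamma_add_one (by positivity)],
      Real.Gamma_eq_integral (by positivity : (0:ℝ) < 2 * H + 1)]
    norm_num
  set I₁ := ∫ z in Set.Ioc (0:ℝ) t, Real.exp (-lam * z) * z ^ (2 * H - 1) with hI₁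
  set I₂ := ∫ z in Set.Ioc (0:ℝ) t, Real.exp (-lam * (t - z)) * z ^ (2 * H - 1) with hI₂
  set T := ∫ z in Set.Ioi t, Real.exp (-lam * z) * z ^ (2 * H - 1) with hT
  set E := Real.exp (-lam * t / 2) with hE
  have hE0 : 0 < E := Real.exp_pos _
  have hsplit : (∫ z in Set.Ioi (0:ℝ), Real.exp (-lam * z) * z ^ (2 * H - 1)) = I₁ + T := by
    rw [← Set.Ioc_union_Ioi_eq_Ioi ht.le,
      setIntegral_union (Set.Ioc_disjoint_Ioi le_rfl) measurableSet_Ioi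
        ((hint lam hlam).mono_set Set.Ioc_subset_Ioi_self)
        ((hint lam hlam).mono_set (Set.Ioi_subset_Ioi ht.le))]
  have hsum : I₁ + T = (1 / lam) ^ (2 * H) * Real.Gamma (2 * H) := by
    rw [← hsplit, hIval lam hlam]
  have hinv : ((1:ℝ) / lam) ^ (2 * H) = 1 / P := by
    rw [one_div, Real.inv_rpow hlam.le, one_div]
  -- nonnegativity
  have hT0 : 0 ≤ T := setIntegral_nonneg measurableSet_Ioi fun x hx =>
    mul_nonneg (Real.exp_pos _).le (Real.rpow_nonneg (le_of_lt (ht.trans hx)) _)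
  have hI20 : 0 ≤ I₂ := setIntegral_nonneg measurableSet_Ioc fun x hx =>
    mul_nonneg (Real.exp_pos _).le (Real.rpow_nonneg hx.1.le _)
  -- rewrite the expression
  have hGval : Real.Gamma (2 * H) = P * (I₁ + T) := by
    rw [hsum, hinv]; field_simp
  have hkey : σ ^ 2 * H * (I₁ + Real.exp (-lam * t) * I₂)
      - (σ ^ 2 / (2 * P)) * (2 * H * Real.Gamma (2 * H))
      = σ ^ 2 * H * (Real.exp (-lam * t) * I₂ - T) := by
    rw [hGval]; field_simp; ring
  -- bound on 2^{2H} and 4^{2H}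
  have h2H4 : (2:ℝ) ^ (2 * H) ≤ 4 := by
    calc (2:ℝ) ^ (2 * H) ≤ (2:ℝ) ^ (2:ℝ) :=
          Real.rpow_le_rpow_of_exponent_le one_le_two (by linarith)
      _ = 4 := by
          rw [show (2:ℝ) = ((2:ℕ):ℝ) by norm_num, Real.rpow_natCast]; norm_num
  -- tail bound
  have hTbound : T ≤ 4 * Real.Gamma (2 * H) / P * E := by
    have step1 : T ≤ ∫ z in Set.Ioi t,
        E * (Real.exp (-(lam / 2) * z) * z ^ (2 * H - 1)) := by
      refine setIntegral_mono_on ((hint lam hlam).mono_set (Set.Ioi_subset_Ioi ht.le))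
        (((hint (lam / 2) (by linarith)).mono_set (Set.Ioi_subset_Ioi ht.le)).const_mul E)
        measurableSet_Ioi fun x hx => ?_
      have hx0 : 0 < x := ht.trans hx
      have hexp : Real.exp (-lam * x) ≤ E * Real.exp (-(lam / 2) * x) := by
        rw [hE, ← Real.exp_add]
        refine Real.exp_le_exp.2 ?_
        have := (Set.mem_Ioi.mp hx).le
        nlinarith
      calc Real.exp (-lam * x) * x ^ (2 * H - 1)
          ≤ (E * Real.exp (-(lam / 2) * x)) * x ^ (2 * H - 1) :=
            mul_le_mul_of_nonneg_right hexp (Real.rpow_nonneg hx0.le _)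
        _ = E * (Real.exp (-(lam / 2) * x) * x ^ (2 * H - 1)) := by ring
    have step2 : (∫ z in Set.Ioi t,
        E * (Real.exp (-(lam / 2) * z) * z ^ (2 * H - 1)))
        ≤ E * ∫ z in Set.Ioi (0:ℝ), Real.exp (-(lam / 2) * z) * z ^ (2 * H - 1) := by
      rw [MeasureTheory.integral_const_mul]
      refine mul_le_mul_of_nonneg_left ?_ hE0.le
      refine setIntegral_mono_set (hint (lam / 2) (by linarith)) ?_
        ((Set.Ioi_subset_Ioi ht.le).eventuallyLE)
      filter_upwards [ae_restrict_mem measurableSet_Ioi] with x hx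
      exact mul_nonneg (Real.exp_pos _).le (Real.rpow_nonneg (le_of_lt hx) _)
    have step3 : (∫ z in Set.Ioi (0:ℝ), Real.exp (-(lam / 2) * z) * z ^ (2 * H - 1))
        ≤ 4 * Real.Gamma (2 * H) / P := by
      rw [hIval (lam / 2) (by linarith)]
      have h12 : (1 / (lam / 2) : ℝ) = 2 * (1 / lam) := by field_simp
      rw [h12, Real.mul_rpow (by norm_num) (by positivity), hinv]
      have : (2:ℝ) ^ (2 * H) * (1 / P) ≤ 4 * (1 / P) :=
        mul_le_mul_of_nonneg_right h2H4 (by positivity)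
      calc (2:ℝ) ^ (2 * H) * (1 / P) * Real.Gamma (2 * H)
          ≤ 4 * (1 / P) * Real.Gamma (2 * H) :=
            mul_le_mul_of_nonneg_right this hΓ.le
        _ = 4 * Real.Gamma (2 * H) / P := by ring
    calc T ≤ E * ∫ z in Set.Ioi (0:ℝ), Real.exp (-(lam / 2) * z) * z ^ (2 * H - 1) :=
          step1.trans step2
      _ ≤ E * (4 * Real.Gamma (2 * H) / P) :=
          mul_le_mul_of_nonneg_left step3 hE0.le
      _ = 4 * Real.Gamma (2 * H) / P * E := by ring
  -- bound on I₂
  have hrpowint : IntegrableOn (fun z : ℝ => z ^ (2 * H - 1)) (Set.Ioc 0 t) :=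
    (intervalIntegral.intervalIntegrable_rpow' (by linarith)).1
  have hI2int : IntegrableOn (fun z : ℝ => Real.exp (-lam * (t - z)) * z ^ (2 * H - 1))
      (Set.Ioc 0 t) := by
    refine Integrable.mono' hrpowint ?_ ?_
    · exact ((Real.continuous_exp.comp (by fun_prop)).aestronglyMeasurable.mul
        (Measurable.aestronglyMeasurable (by fun_prop)))
    · filter_upwards [ae_restrict_mem measurableSet_Ioc] with x hx
      have hx0 : 0 < x := hx.1
      rw [Real.norm_eq_abs, abs_of_nonneg (mul_nonneg (Real.exp_pos _).le (Real.rpow_nonneg hx0.le _))]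
      have : Real.exp (-lam * (t - x)) ≤ 1 := by
        rw [Real.exp_le_one_iff]
        nlinarith [hx.2]
      nlinarith [Real.rpow_nonneg hx0.le (2 * H - 1)]
  have hI2bound : I₂ ≤ t ^ (2 * H) / (2 * H) := by
    have h1 : I₂ ≤ ∫ z in Set.Ioc (0:ℝ) t, z ^ (2 * H - 1) := by
      refine setIntegral_mono_on hI2int hrpowint measurableSet_Ioc fun x hx => ?_
      have : Real.exp (-lam * (t - x)) ≤ 1 := by
        rw [Real.exp_le_one_iff]; nlinarith [hx.2]
      nlinarith [Real.rpow_nonneg hx.1.le (2 * H - 1)]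
    have h2 : (∫ z in Set.Ioc (0:ℝ) t, z ^ (2 * H - 1)) = t ^ (2 * H) / (2 * H) := by
      rw [← intervalIntegral.integral_of_le ht.le,
        integral_rpow (Or.inl (by linarith))]
      rw [Real.zero_rpow (by linarith : (0:ℝ) < 2 * H - 1 + 1).ne']
      ring_nf
    linarith [h1, h2.le]
  -- exponential decay bound
  have heu : Real.exp (-lam * t) * t ^ (2 * H) ≤ 16 / P * E := by
    set u := lam * t with hu
    have hu0 : 0 < u := mul_pos hlam ht
    have ht2H : t ^ (2 * H) = u ^ (2 * H) / P := by
      rw [hu, hP, Real.mul_rpow hlam.le ht.le]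
      field_simp
    have hub : u ^ (2 * H) ≤ 16 * Real.exp (u / 2) := by
      have h4 : u ≤ 4 * Real.exp (u / 4) := by
        have := Real.add_one_le_exp (u / 4)
        nlinarith
      calc u ^ (2 * H) ≤ (4 * Real.exp (u / 4)) ^ (2 * H) :=
            Real.rpow_le_rpow hu0.le h4 (by linarith)
        _ = 4 ^ (2 * H) * Real.exp (u / 4) ^ (2 * H) :=
            Real.mul_rpow (by norm_num) (Real.exp_pos _).le
        _ = 4 ^ (2 * H) * Real.exp (u / 4 * (2 * H)) := by
            rw [← Real.exp_mul]
        _ ≤ 16 * Real.exp (u / 2) := by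
            have e1 : (4:ℝ) ^ (2 * H) ≤ 16 := by
              calc (4:ℝ) ^ (2 * H) ≤ (4:ℝ) ^ (2:ℝ) :=
                    Real.rpow_le_rpow_of_exponent_le (by norm_num) (by linarith)
                _ = 16 := by
                    rw [show (2:ℝ) = ((2:ℕ):ℝ) by norm_num, Real.rpow_natCast]; norm_num
            have e2 : Real.exp (u / 4 * (2 * H)) ≤ Real.exp (u / 2) := by
              refine Real.exp_le_exp.2 ?_
              nlinarith
            nlinarith [Real.exp_pos (u / 4 * (2 * H)), Real.exp_pos (u / 2)]
    have hEe : E = Real.exp (-u) * Real.exp (u / 2) := by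
      rw [hE, ← Real.exp_add, hu]; ring_nf
    calc Real.exp (-lam * t) * t ^ (2 * H)
        = Real.exp (-u) * (u ^ (2 * H) / P) := by rw [ht2H, hu]; ring_nf
      _ ≤ Real.exp (-u) * (16 * Real.exp (u / 2) / P) := by gcongr
      _ = 16 / P * (Real.exp (-u) * Real.exp (u / 2)) := by ring
      _ = 16 / P * E := by rw [hEe]
  -- combine
  have hb1 : Real.exp (-lam * t) * I₂ ≤ 8 / (H * P) * E := by
    calc Real.exp (-lam * t) * I₂
        ≤ Real.exp (-lam * t) * (t ^ (2 * H) / (2 * H)) :=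
          mul_le_mul_of_nonneg_left hI2bound (Real.exp_pos _).le
      _ = (Real.exp (-lam * t) * t ^ (2 * H)) * (1 / (2 * H)) := by ring
      _ ≤ (16 / P * E) * (1 / (2 * H)) :=
          mul_le_mul_of_nonneg_right heu (by positivity)
      _ = 8 / (H * P) * E := by field_simp; ring
  rw [hJ, hkey]
  calc |σ ^ 2 * H * (Real.exp (-lam * t) * I₂ - T)|
      = σ ^ 2 * H * |Real.exp (-lam * t) * I₂ - T| := by
        rw [abs_mul, abs_of_nonneg (by positivity : (0:ℝ) ≤ σ ^ 2 * H)]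
    _ ≤ σ ^ 2 * H * (Real.exp (-lam * t) * I₂ + T) := by
        refine mul_le_mul_of_nonneg_left ?_ (by positivity)
        have := abs_sub (Real.exp (-lam * t) * I₂) T
        rw [abs_of_nonneg (mul_nonneg (Real.exp_pos _).le hI20), abs_of_nonneg hT0] at this
        exact this
    _ ≤ σ ^ 2 * H * (8 / (H * P) * E + 4 * Real.Gamma (2 * H) / P * E) :=
        mul_le_mul_of_nonneg_left (add_le_add hb1 hTbound) (by positivity)
    _ = (4 * H * Real.Gamma (2 * H) + 8) * (σ ^ 2 / P) * E := by
        field_simp; ring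
end

section
/- Let f : [0,T] → V be continuous into a Banach space V, let λ > 0, and suppose there exists a control ω with ω(0,T) finite such that whenever ω(s,t)^{1/p} ≤ 1/(4λ) one has ‖f‖_{p-var,[s,t]}^p ≤ ω(s,t). Then ‖f‖_{p-var,[0,T]}^p ≤ C(λ, p) (1 + ω(0,T))^p, i.e., finite p-variation on small intervals characterized by a smallness condition on a control propagates to finite global p-variation with an explicit polynomial bound in ω(0,T). -/
private lemma aux_add_rpow {x y p : ℝ} (hx : 0 ≤ x) (hy : 0 ≤ y) (hp : 1 ≤ p) :
    x ^ p + y ^ p ≤ (x + y) ^ p := by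
  have h := NNReal.coe_le_coe.2 (NNReal.add_rpow_le_rpow_add ⟨x, hx⟩ ⟨y, hy⟩ hp)
  push_cast [NNReal.coe_rpow] at h
  exact h

private lemma aux_sum_rpow {ι : Type*} (s : Finset ι) (x : ι → ℝ) {p : ℝ}
    (hx : ∀ i ∈ s, 0 ≤ x i) (hp : 1 ≤ p) :
    ∑ i ∈ s, x i ^ p ≤ (∑ i ∈ s, x i) ^ p := by
  induction s using Finset.cons_induction with
  | empty => simp [Real.zero_rpow (by linarith : p ≠ 0)]
  | cons a s ha ih =>
    rw [Finset.sum_cons, Finset.sum_cons]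
    have h1 : 0 ≤ x a := hx a (Finset.mem_cons_self a s)
    have h2 : ∀ i ∈ s, 0 ≤ x i := fun i hi => hx i (Finset.mem_cons_of_mem hi)
    calc x a ^ p + ∑ i ∈ s, x i ^ p ≤ x a ^ p + (∑ i ∈ s, x i) ^ p := by
          linarith [ih h2]
      _ ≤ (x a + ∑ i ∈ s, x i) ^ p :=
          aux_add_rpow h1 (Finset.sum_nonneg h2) hp

set_option maxHeartbeats 1000000 in
/-- Local-to-global p-variation estimate: if, whenever a control ω satisfies the
smallness condition ω(s,t)^{1/p} ≤ 1/(4λ), the p-variation of f on [s,t] is bounded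
by ω(s,t), then the global p-variation of f on [0,T] is bounded by
C(λ,p) (1 + ω(0,T))^p. p-variation bounds are expressed via partition sums. -/
theorem stmt14 (lam p : ℝ) (hlam : 0 < lam) (hp : 1 ≤ p) :
    ∃ C > 0, ∀ (T : ℝ), 0 < T → ∀ (ω : ℝ → ℝ → ℝ),
      (∀ s, ω s s = 0) → (∀ s t, 0 ≤ ω s t) →
      (∀ s u t, 0 ≤ s → s ≤ u → u ≤ t → t ≤ T → ω s u + ω u t ≤ ω s t) →
      ContinuousOn (Function.uncurry ω) (Set.Icc 0 T ×ˢ Set.Icc 0 T) →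
      ∀ (V : Type) [NormedAddCommGroup V] (f : ℝ → V), ContinuousOn f (Set.Icc 0 T) →
      (∀ s t, 0 ≤ s → s ≤ t → t ≤ T → ω s t ^ (1 / p) ≤ 1 / (4 * lam) →
        ∀ (n : ℕ) (u : ℕ → ℝ), Monotone u → (∀ i ≤ n, u i ∈ Set.Icc s t) →
          ∑ i ∈ Finset.range n, ‖f (u (i + 1)) - f (u i)‖ ^ p ≤ ω s t) →
      ∀ (n : ℕ) (u : ℕ → ℝ), Monotone u → (∀ i ≤ n, u i ∈ Set.Icc (0:ℝ) T) →
        ∑ i ∈ Finset.range n, ‖f (u (i + 1)) - f (u i)‖ ^ p ≤ C * (1 + ω 0 T) ^ p := by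
  have hp0 : (0:ℝ) < p := lt_of_lt_of_le one_pos hp
  set ε : ℝ := 1 / (4 * lam) with hεdef
  have hε : 0 < ε := by positivity
  set d : ℝ := 3 * ε ^ (1 - p) with hddef
  have hd : 0 < d := by positivity
  refine ⟨1 + d ^ p, by positivity, ?_⟩
  intro T hT ω hω0 hωnn hsup hωcont V _ f hf hloc n u hmono hmem
  have hεp : 0 < ε ^ p := Real.rpow_pos_of_pos hε p
  -- two point estimate
  have two_pt : ∀ a b : ℝ, 0 ≤ a → a ≤ b → b ≤ T → ω a b ≤ ε ^ p →
      ‖f b - f a‖ ^ p ≤ ω a b := by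
    intro a b ha hab hbT hsmall
    have hsm : ω a b ^ (1 / p) ≤ ε := by
      have h1 := Real.rpow_le_rpow (hωnn a b) hsmall (by positivity : (0:ℝ) ≤ 1 / p)
      rwa [← Real.rpow_mul hε.le,
        mul_one_div, div_self (ne_of_gt hp0), Real.rpow_one] at h1
    have := hloc a b ha hab hbT hsm 1 (fun j => if j = 0 then a else b)
      (by
        intro i j hij
        by_cases hi : i = 0
        · by_cases hj : j = 0 <;> simp [hi, hj, hab]
        · have hj : j ≠ 0 := by omega
          simp [hi, hj])
      (by
        intro i hi
        interval_cases i <;> simp [Set.mem_Icc, hab, le_refl])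
    simpa using this
  -- key inductive estimate
  have key : ∀ k : ℕ, ∀ a b : ℝ, 0 ≤ a → a ≤ b → b ≤ T →
      ω a b ≤ (k + 1 : ℝ) * ε ^ p → ‖f b - f a‖ ≤ (k + 1 : ℝ) * ε := by
    intro k
    induction k with
    | zero =>
      intro a b ha hab hbT hab'
      rw [Nat.cast_zero, zero_add, one_mul] at hab' ⊢
      have h1 := two_pt a b ha hab hbT hab'
      have h2 : ‖f b - f a‖ ^ p ≤ ε ^ p := le_trans h1 hab'
      have h3 := Real.rpow_le_rpow (by positivity) h2 (by positivity : (0:ℝ) ≤ 1 / p)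
      rwa [← Real.rpow_mul (norm_nonneg _), ← Real.rpow_mul hε.le,
        mul_one_div, div_self (ne_of_gt hp0), Real.rpow_one, Real.rpow_one] at h3
    | succ k ih =>
      intro a b ha hab hbT hab'
      push_cast at hab' ⊢
      by_cases hsmall : ω a b ≤ ε ^ p
      · have h1 := two_pt a b ha hab hbT hsmall
        have h2 : ‖f b - f a‖ ^ p ≤ ε ^ p := le_trans h1 hsmall
        have h3 := Real.rpow_le_rpow (by positivity) h2 (by positivity : (0:ℝ) ≤ 1 / p)
        rw [← Real.rpow_mul (norm_nonneg _), ← Real.rpow_mul hε.le,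
          mul_one_div, div_self (ne_of_gt hp0), Real.rpow_one, Real.rpow_one] at h3
        nlinarith [Nat.cast_nonneg (α := ℝ) k]
      · push_neg at hsmall
        -- find intermediate point via IVT
        have hcont : ContinuousOn (fun t => ω a t) (Set.Icc a b) := by
          have hmap : Set.MapsTo (fun t => ((a, t) : ℝ × ℝ)) (Set.Icc a b)
              (Set.Icc 0 T ×ˢ Set.Icc 0 T) := by
            intro t ht
            exact ⟨⟨ha, le_trans hab hbT⟩, ⟨le_trans ha ht.1, le_trans ht.2 hbT⟩⟩
          exact hωcont.comp (Continuous.continuousOn (by continuity)) hmap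
        have hmemIcc : ε ^ p ∈ Set.Icc (ω a a) (ω a b) := by
          rw [hω0 a]
          exact ⟨hεp.le, hsmall.le⟩
        obtain ⟨c, hc, hgc⟩ := intermediate_value_Icc hab hcont hmemIcc
        have hc0 : (0:ℝ) ≤ c := le_trans ha hc.1
        have hsupp := hsup a c b ha hc.1 hc.2 hbT
        have hcb : ω c b ≤ (k + 1 : ℝ) * ε ^ p := by
          have h' : ω a c = ε ^ p := hgc
          nlinarith
        have h1 := ih c b hc0 hc.2 hbT hcb
        have hgc' : ω a c = ε ^ p := hgc
        have h2 : ‖f c - f a‖ ^ p ≤ ε ^ p := by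
          have := two_pt a c ha hc.1 (le_trans hc.2 hbT) (le_of_eq hgc')
          rw [hgc'] at this; exact this
        have h3 := Real.rpow_le_rpow (by positivity) h2 (by positivity : (0:ℝ) ≤ 1 / p)
        rw [← Real.rpow_mul (norm_nonneg _), ← Real.rpow_mul hε.le,
          mul_one_div, div_self (ne_of_gt hp0), Real.rpow_one, Real.rpow_one] at h3
        have htri : ‖f b - f a‖ ≤ ‖f b - f c‖ + ‖f c - f a‖ := by
          have : f b - f a = (f b - f c) + (f c - f a) := by abel
          rw [this]; exact norm_add_le _ _
        linarith
  -- per-step estimate for "bad" steps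
  have step_bad : ∀ a b : ℝ, 0 ≤ a → a ≤ b → b ≤ T → ε ^ p < ω a b →
      ‖f b - f a‖ ≤ d * ω a b := by
    intro a b ha hab hbT hbig
    obtain ⟨x, hxdef⟩ : ∃ x : ℝ, x = ω a b / ε ^ p := ⟨_, rfl⟩
    have hx1 : 1 < x := hxdef ▸ (one_lt_div hεp).2 hbig
    obtain ⟨k, hkdef⟩ : ∃ k : ℕ, k = ⌈x⌉₊ := ⟨_, rfl⟩
    have hxk : x ≤ (k : ℝ) := hkdef ▸ Nat.le_ceil x
    have hklt : (k : ℝ) < x + 1 := hkdef ▸ Nat.ceil_lt_add_one (by linarith)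
    have hωeq : ω a b = x * ε ^ p := by
      rw [hxdef, div_mul_cancel₀ _ (ne_of_gt hεp)]
    have hωk : ω a b ≤ ((k : ℝ) + 1) * ε ^ p := by nlinarith
    have h1 := key k a b ha hab hbT hωk
    have h2 : ((k : ℝ) + 1) * ε ≤ 3 * x * ε := by nlinarith
    have h3 : 3 * x * ε = d * ω a b := by
      have hε1p : ε ^ (1 - p) = ε / ε ^ p := by
        rw [Real.rpow_sub hε, Real.rpow_one]
      rw [hddef, hxdef, hε1p]
      ring
    linarith
  -- chain superadditivity
  have chain : ∀ m : ℕ, m ≤ n →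
      ∑ i ∈ Finset.range m, ω (u i) (u (i + 1)) ≤ ω (u 0) (u m) := by
    intro m
    induction m with
    | zero => intro _; simp [hω0]
    | succ m ih =>
      intro hm
      rw [Finset.sum_range_succ]
      have h1 := ih (by omega)
      have h2 := hsup (u 0) (u m) (u (m + 1)) (hmem 0 (by omega)).1
        (hmono (Nat.zero_le m)) (hmono (Nat.le_succ m)) (hmem (m + 1) hm).2
      linarith
  have hΩtot : ∑ i ∈ Finset.range n, ω (u i) (u (i + 1)) ≤ ω 0 T := by
    rcases Nat.eq_zero_or_pos n with rfl | hn
    · simp [hωnn 0 T]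
    · have h1 := chain n le_rfl
      have h2 := hsup 0 (u 0) (u n) le_rfl (hmem 0 (by omega)).1
        (hmono (Nat.zero_le n)) (hmem n le_rfl).2
      have h3 := hsup 0 (u n) T le_rfl (hmem n le_rfl).1 (hmem n le_rfl).2 le_rfl
      have h4 := hωnn 0 (u 0)
      have h5 := hωnn (u n) T
      linarith
  set Ω : ℝ := ω 0 T with hΩdef
  have hΩnn : 0 ≤ Ω := hωnn 0 T
  -- split the sum
  set P : ℕ → Prop := fun i => ω (u i) (u (i + 1)) ≤ ε ^ p with hPdef
  classical
  rw [← Finset.sum_filter_add_sum_filter_not (Finset.range n) P]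
  have hub : ∀ i ∈ Finset.range n, 0 ≤ u i ∧ u i ≤ u (i + 1) ∧ u (i + 1) ≤ T := by
    intro i hi
    rw [Finset.mem_range] at hi
    exact ⟨(hmem i (by omega)).1, hmono (Nat.le_succ i), (hmem (i + 1) (by omega)).2⟩
  -- good part
  have hgood : ∑ i ∈ (Finset.range n).filter P, ‖f (u (i + 1)) - f (u i)‖ ^ p ≤ Ω := by
    calc ∑ i ∈ (Finset.range n).filter P, ‖f (u (i + 1)) - f (u i)‖ ^ p
        ≤ ∑ i ∈ (Finset.range n).filter P, ω (u i) (u (i + 1)) := by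
          apply Finset.sum_le_sum
          intro i hi
          obtain ⟨h1, h2, h3⟩ := hub i (Finset.mem_filter.1 hi).1
          exact two_pt (u i) (u (i + 1)) h1 h2 h3 (Finset.mem_filter.1 hi).2
      _ ≤ ∑ i ∈ Finset.range n, ω (u i) (u (i + 1)) :=
          Finset.sum_le_sum_of_subset_of_nonneg (Finset.filter_subset _ _)
            (fun i _ _ => hωnn _ _)
      _ ≤ Ω := hΩtot
  -- bad part
  have hbad : ∑ i ∈ (Finset.range n).filter (fun i => ¬ P i),
      ‖f (u (i + 1)) - f (u i)‖ ^ p ≤ d ^ p * (1 + Ω) ^ p := by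
    have hsub : ∑ i ∈ (Finset.range n).filter (fun i => ¬ P i), ω (u i) (u (i + 1)) ≤ Ω :=
      le_trans (Finset.sum_le_sum_of_subset_of_nonneg (Finset.filter_subset _ _)
        (fun i _ _ => hωnn _ _)) hΩtot
    calc ∑ i ∈ (Finset.range n).filter (fun i => ¬ P i), ‖f (u (i + 1)) - f (u i)‖ ^ p
        ≤ ∑ i ∈ (Finset.range n).filter (fun i => ¬ P i), (d * ω (u i) (u (i + 1))) ^ p := by
          apply Finset.sum_le_sum
          intro i hi
          obtain ⟨h1, h2, h3⟩ := hub i (Finset.mem_filter.1 hi).1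
          have hbig : ε ^ p < ω (u i) (u (i + 1)) := by
            have := (Finset.mem_filter.1 hi).2
            simp only [hPdef, not_le] at this
            exact this
          exact Real.rpow_le_rpow (norm_nonneg _)
            (step_bad (u i) (u (i + 1)) h1 h2 h3 hbig) hp0.le
      _ ≤ (∑ i ∈ (Finset.range n).filter (fun i => ¬ P i), d * ω (u i) (u (i + 1))) ^ p :=
          aux_sum_rpow _ _ (fun i _ => mul_nonneg hd.le (hωnn _ _)) hp
      _ ≤ (d * Ω) ^ p := by
          apply Real.rpow_le_rpow (Finset.sum_nonneg fun i _ => mul_nonneg hd.le (hωnn _ _))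
          · rw [← Finset.mul_sum]
            exact mul_le_mul_of_nonneg_left hsub hd.le
          · exact hp0.le
      _ = d ^ p * Ω ^ p := Real.mul_rpow hd.le hΩnn
      _ ≤ d ^ p * (1 + Ω) ^ p := by
          apply mul_le_mul_of_nonneg_left _ (by positivity)
          exact Real.rpow_le_rpow hΩnn (by linarith) hp0.le
  have hΩle : Ω ≤ (1 + Ω) ^ p := by
    have h1 : (1 + Ω) ^ (1:ℝ) ≤ (1 + Ω) ^ p :=
      Real.rpow_le_rpow_of_exponent_le (by linarith) hp
    rw [Real.rpow_one] at h1
    linarith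
  calc ∑ i ∈ (Finset.range n).filter P, ‖f (u (i + 1)) - f (u i)‖ ^ p +
        ∑ i ∈ (Finset.range n).filter (fun i => ¬ P i), ‖f (u (i + 1)) - f (u i)‖ ^ p
      ≤ Ω + d ^ p * (1 + Ω) ^ p := add_le_add hgood hbad
    _ ≤ (1 + Ω) ^ p + d ^ p * (1 + Ω) ^ p := by linarith
    _ = (1 + d ^ p) * (1 + Ω) ^ p := by ring
end
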